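/- Let C be a closed subspace of a real Hilbert space X and P_C the orthogonal projection onto C. For the alternating sequence x₀ = x̂, xₙ = P_{C} xₙ₋₁, the sequence is constant after the first step: xₙ = P_C(x̂) for all n ≥ 1. More generally, for two closed subspaces C₁, C₂, the von Neumann alternating projection sequence xₙ = (P_{C₂}P_{C₁})ⁿ x̂ converges in norm to P_{C₁∩C₂}(x̂). -/

import Mathlib

open Filter Topology InnerProductSpace Submodule

namespace VNAPaux

variable {X : Type*} [NormedAddCommGroup X] [InnerProductSpace ℝ X] [CompleteSpace X]

/-- Projection as a map `X → X`. -/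
noncomputable def p (C : Submodule ℝ X) [HasOrthogonalProjection C] : X → X :=
  fun v => (orthogonalProjection C v : X)

variable (C : Submodule ℝ X) [HasOrthogonalProjection C]

lemma p_mem (v : X) : p C v ∈ C := (orthogonalProjection C v).2

lemma p_of_mem {v : X} (h : v ∈ C) : p C v = v := by
  simpa [p] using starProjection_eq_self_iff.2 h

lemma p_idem (v : X) : p C (p C v) = p C v := p_of_mem C (p_mem C v)

lemma p_selfadj (u v : X) : ⟪p C u, v⟫_ℝ = ⟪u, p C v⟫_ℝ :=
  inner_starProjection_left_eq_right C u v

lemma p_norm_le (v : X) : ‖p C v‖ ≤ ‖v‖ := by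
  have h1 : ‖orthogonalProjection C v‖ ≤ ‖orthogonalProjection C‖ * ‖v‖ :=
    (orthogonalProjection C).le_opNorm v
  have h2 : ‖orthogonalProjection C‖ * ‖v‖ ≤ 1 * ‖v‖ :=
    mul_le_mul_of_nonneg_right (orthogonalProjection_norm_le C) (norm_nonneg v)
  calc ‖p C v‖ = ‖orthogonalProjection C v‖ := rfl
    _ ≤ 1 * ‖v‖ := h1.trans h2
    _ = ‖v‖ := one_mul _

lemma p_cont : Continuous (p C) :=
  continuous_subtype_val.comp (orthogonalProjection C).continuous

lemma p_sq (v : X) : ⟪p C v, v⟫_ℝ = ‖p C v‖ ^ 2 := by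
  have : ⟪p C v, v⟫_ℝ = ⟪p C (p C v), v⟫_ℝ := by rw [p_idem]
  rw [this, p_selfadj C (p C v) v, real_inner_self_eq_norm_sq]

variable (C₁ C₂ : Submodule ℝ X) [HasOrthogonalProjection C₁] [HasOrthogonalProjection C₂]

/-- The positive self-adjoint operator `P₁ P₂ P₁`. -/
noncomputable def A : X → X := fun v => p C₁ (p C₂ (p C₁ v))

lemma A_selfadj (u v : X) : ⟪A C₁ C₂ u, v⟫_ℝ = ⟪u, A C₁ C₂ v⟫_ℝ := by
  simp only [A, p_selfadj]

lemma A_iter_selfadj (n : ℕ) (u v : X) :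
    ⟪(A C₁ C₂)^[n] u, v⟫_ℝ = ⟪u, (A C₁ C₂)^[n] v⟫_ℝ := by
  induction n generalizing u v with
  | zero => simp
  | succ k ih =>
    rw [Function.iterate_succ_apply, Function.iterate_succ_apply']
    rw [ih, ← A_selfadj]

lemma A_iter_add (n m : ℕ) (v : X) :
    ⟪(A C₁ C₂)^[n + m] v, v⟫_ℝ = ⟪(A C₁ C₂)^[n] v, (A C₁ C₂)^[m] v⟫_ℝ := by
  rw [add_comm, Function.iterate_add_apply, A_iter_selfadj]

lemma A_inner (v : X) : ⟪A C₁ C₂ v, v⟫_ℝ = ‖p C₂ (p C₁ v)‖ ^ 2 := by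
  have : ⟪A C₁ C₂ v, v⟫_ℝ = ⟪p C₂ (p C₁ v), p C₁ v⟫_ℝ := by
    rw [A, p_selfadj]
  rw [this, p_sq]

lemma A_norm_le (v : X) : ‖A C₁ C₂ v‖ ≤ ‖p C₂ (p C₁ v)‖ := p_norm_le _ _

lemma A_cont : Continuous (A C₁ C₂) :=
  (p_cont C₁).comp ((p_cont C₂).comp (p_cont C₁))

/-- The quadratic form sequence. -/
noncomputable def a (v : X) : ℕ → ℝ := fun n => ⟪(A C₁ C₂)^[n] v, v⟫_ℝ

lemma a_even (v : X) (k : ℕ) : a C₁ C₂ v (2 * k) = ‖(A C₁ C₂)^[k] v‖ ^ 2 := by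
  rw [a, two_mul, A_iter_add, real_inner_self_eq_norm_sq]

lemma a_succ_even (v : X) (k : ℕ) :
    a C₁ C₂ v (2 * k + 1) = ‖p C₂ (p C₁ ((A C₁ C₂)^[k] v))‖ ^ 2 := by
  rw [a, two_mul, show k + k + 1 = k + (k + 1) by ring, A_iter_add,
    Function.iterate_succ_apply', ← A_inner, A_selfadj]

lemma a_nonneg (v : X) (n : ℕ) : 0 ≤ a C₁ C₂ v n := by
  rcases Nat.even_or_odd n with ⟨k, hk⟩ | ⟨k, hk⟩
  · rw [hk, ← two_mul, a_even]; positivity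
  · rw [hk, a_succ_even]; positivity

lemma a_antitone (v : X) : Antitone (a C₁ C₂ v) := by
  refine antitone_nat_of_succ_le fun n => ?_
  rcases Nat.even_or_odd n with ⟨k, hk⟩ | ⟨k, hk⟩
  · subst hk
    rw [← two_mul, a_succ_even, a_even]
    have h1 : ‖p C₂ (p C₁ ((A C₁ C₂)^[k] v))‖ ≤ ‖p C₁ ((A C₁ C₂)^[k] v)‖ := p_norm_le _ _
    have h2 : ‖p C₁ ((A C₁ C₂)^[k] v)‖ ≤ ‖(A C₁ C₂)^[k] v‖ := p_norm_le _ _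
    have := h1.trans h2
    exact pow_le_pow_left₀ (norm_nonneg _) this 2
  · subst hk
    rw [show 2 * k + 1 + 1 = 2 * (k + 1) by ring, a_even, a_succ_even,
      Function.iterate_succ_apply']
    exact pow_le_pow_left₀ (norm_nonneg _) (A_norm_le C₁ C₂ _) 2

lemma a_tendsto (v : X) :
    ∃ l : ℝ, (∀ n, l ≤ a C₁ C₂ v n) ∧ Tendsto (a C₁ C₂ v) atTop (𝓝 l) := by
  have hbdd : BddBelow (Set.range (a C₁ C₂ v)) :=
    ⟨0, by rintro _ ⟨n, rfl⟩; exact a_nonneg C₁ C₂ v n⟩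
  refine ⟨⨅ n, a C₁ C₂ v n, fun n => ciInf_le hbdd n, ?_⟩
  exact tendsto_atTop_ciInf (a_antitone C₁ C₂ v) hbdd

lemma A_iter_cauchy (v : X) : CauchySeq (fun n => (A C₁ C₂)^[n] v) := by
  obtain ⟨l, hl, htend⟩ := a_tendsto C₁ C₂ v
  rw [Metric.cauchySeq_iff']
  intro ε hε
  have hε2 : (0 : ℝ) < ε ^ 2 / 2 := by positivity
  obtain ⟨N, hN⟩ := (Metric.tendsto_atTop.1 htend) (ε ^ 2 / 2) hε2
  refine ⟨N, fun n hn => ?_⟩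
  have key : dist ((A C₁ C₂)^[n] v) ((A C₁ C₂)^[N] v) ^ 2 < ε ^ 2 := by
    have hdist : dist ((A C₁ C₂)^[n] v) ((A C₁ C₂)^[N] v) ^ 2
        = a C₁ C₂ v (2 * n) + a C₁ C₂ v (2 * N) - 2 * a C₁ C₂ v (n + N) := by
      rw [dist_eq_norm, a_even, a_even, a, A_iter_add]
      rw [@norm_sub_sq_real]
      ring
    have h1 : a C₁ C₂ v (2 * n) ≤ a C₁ C₂ v (2 * N) :=
      a_antitone C₁ C₂ v (by omega)
    have h2 : l ≤ a C₁ C₂ v (n + N) := hl _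
    have h3 : |a C₁ C₂ v (2 * N) - l| < ε ^ 2 / 2 := by
      simpa [Real.dist_eq] using hN (2 * N) (by omega)
    have h4 : a C₁ C₂ v (2 * N) - l < ε ^ 2 / 2 := lt_of_abs_lt h3
    rw [hdist]
    nlinarith
  have hd : 0 ≤ dist ((A C₁ C₂)^[n] v) ((A C₁ C₂)^[N] v) := dist_nonneg
  nlinarith [key, hd]

end VNAPaux

open VNAPaux in
/-- Projection onto a closed subspace is idempotent along the SOP sequence, and
the von Neumann alternating projection sequence for two closed subspaces
converges in norm to the projection onto their intersection. -/
theorem alternating_projections_subspaces {X : Type*} [NormedAddCommGroup X]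
    [InnerProductSpace ℝ X] [CompleteSpace X]
    (C : Submodule ℝ X) [Submodule.HasOrthogonalProjection C]
    (xhat : X) (x : ℕ → X) (h0 : x 0 = xhat)
    (hrec : ∀ n : ℕ, x (n + 1) = (C.subtypeL ∘L Submodule.orthogonalProjectionOnto C) (x n))
    (C₁ C₂ : Submodule ℝ X) [Submodule.HasOrthogonalProjection C₁] [Submodule.HasOrthogonalProjection C₂]
    [Submodule.HasOrthogonalProjection (C₁ ⊓ C₂)] :
    (∀ n : ℕ, 1 ≤ n → x n = (Submodule.orthogonalProjectionOnto C xhat : X)) ∧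
    Filter.Tendsto
      (fun n : ℕ =>
        ((fun v : X => ((Submodule.orthogonalProjectionOnto C₂) ((Submodule.orthogonalProjectionOnto C₁ v : X)) : X))^[n]) xhat)
      Filter.atTop (nhds ((Submodule.orthogonalProjectionOnto (C₁ ⊓ C₂) xhat : X))) := by
  constructor
  · intro n hn
    induction n with
    | zero => omega
    | succ k ih =>
      rcases Nat.eq_zero_or_pos k with hk | hk
      · subst hk; rw [hrec, h0]; rfl
      · rw [hrec, ih hk]
        simpa using congrArg (Submodule.subtype C) (orthogonalProjection_mem_subspace_eq_self
          (orthogonalProjection C xhat))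
  · classical
    set f : X → X :=
      fun v : X => ((orthogonalProjection C₂) ((orthogonalProjection C₁ v : X)) : X) with hf
    have hfp : ∀ v, f v = p C₂ (p C₁ v) := fun v => rfl
    set y := p C₁ xhat with hy
    obtain ⟨z, hz⟩ := cauchySeq_tendsto_of_complete (A_iter_cauchy C₁ C₂ y)
    have hAz : A C₁ C₂ z = z := by
      have h1 : Filter.Tendsto (fun n => A C₁ C₂ ((A C₁ C₂)^[n] y)) Filter.atTop
          (nhds (A C₁ C₂ z)) := ((A_cont C₁ C₂).tendsto z).comp hz
      have h2 : (fun n => A C₁ C₂ ((A C₁ C₂)^[n] y)) = fun n => (A C₁ C₂)^[n + 1] y := by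
        funext n; rw [Function.iterate_succ_apply']
      rw [h2] at h1
      have h3 : Filter.Tendsto (fun n => (A C₁ C₂)^[n + 1] y) Filter.atTop (nhds z) :=
        hz.comp (Filter.tendsto_add_atTop_nat 1)
      exact tendsto_nhds_unique h1 h3
    have hz1 : z ∈ C₁ := by rw [← hAz]; exact p_mem C₁ _
    have hp1z : p C₁ z = z := p_of_mem C₁ hz1
    have hle : ‖z‖ ≤ ‖p C₂ z‖ := by
      conv_lhs => rw [← hAz]
      calc ‖A C₁ C₂ z‖ ≤ ‖p C₂ (p C₁ z)‖ := A_norm_le C₁ C₂ z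
        _ = ‖p C₂ z‖ := by rw [hp1z]
    have hnorm : ‖p C₂ z‖ = ‖z‖ := le_antisymm (p_norm_le C₂ z) hle
    have hz2 : z ∈ C₂ := by
      have horth : ⟪p C₂ z, z - p C₂ z⟫_ℝ = 0 :=
        (Submodule.mem_orthogonal C₂ (z - p C₂ z)).1
          (sub_starProjection_mem_orthogonal (K := C₂) z) _ (p_mem C₂ z)
      have hpyth : ‖z‖ ^ 2 = ‖p C₂ z‖ ^ 2 + ‖z - p C₂ z‖ ^ 2 := by
        have := norm_add_sq_real (p C₂ z) (z - p C₂ z)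
        simpa [horth] using this
      have hzero : ‖z - p C₂ z‖ ^ 2 = 0 := by rw [hnorm] at hpyth; linarith
      have : z - p C₂ z = 0 := by
        have := pow_eq_zero_iff (n := 2) (by norm_num) |>.1 hzero
        simpa using this
      have hpz : p C₂ z = z := by
        have := sub_eq_zero.1 this
        exact this.symm
      exact starProjection_eq_self_iff.1 hpz
    have hzM : z ∈ C₁ ⊓ C₂ := Submodule.mem_inf.2 ⟨hz1, hz2⟩
    have hkey : ∀ w ∈ C₁ ⊓ C₂, ⟪xhat - z, w⟫_ℝ = 0 := by
      intro w hw
      obtain ⟨hw1, hw2⟩ := Submodule.mem_inf.1 hw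
      have hAw : A C₁ C₂ w = w := by
        show p C₁ (p C₂ (p C₁ w)) = w
        rw [p_of_mem C₁ hw1, p_of_mem C₂ hw2, p_of_mem C₁ hw1]
      have hAnw : ∀ n, (A C₁ C₂)^[n] w = w := fun n => Function.iterate_fixed hAw n
      have h1 : ∀ n : ℕ, ⟪(A C₁ C₂)^[n] y, w⟫_ℝ = ⟪y, w⟫_ℝ := by
        intro n; rw [A_iter_selfadj, hAnw]
      have h2 : Filter.Tendsto (fun n => ⟪(A C₁ C₂)^[n] y, w⟫_ℝ) Filter.atTop
          (nhds ⟪z, w⟫_ℝ) := hz.inner tendsto_const_nhds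
      have h3 : ⟪z, w⟫_ℝ = ⟪y, w⟫_ℝ := by
        refine tendsto_nhds_unique h2 ?_
        simp only [h1]; exact tendsto_const_nhds
      have h4 : ⟪xhat - y, w⟫_ℝ = 0 := by
        have := (Submodule.mem_orthogonal C₁ (xhat - y)).1
          (sub_starProjection_mem_orthogonal (K := C₁) xhat) w hw1
        rw [real_inner_comm]; exact this
      have hsplit : ⟪xhat - z, w⟫_ℝ = ⟪xhat - y, w⟫_ℝ + ⟪y - z, w⟫_ℝ := by
        rw [← inner_add_left, sub_add_sub_cancel]
      rw [hsplit, h4, inner_sub_left, h3]; ring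
    have hproj : (orthogonalProjection (C₁ ⊓ C₂) xhat : X) = z :=
      eq_starProjection_of_mem_of_inner_eq_zero hzM hkey
    have hfix1 : ∀ n, p C₁ ((A C₁ C₂)^[n] y) = (A C₁ C₂)^[n] y := by
      intro n
      cases n with
      | zero => simpa [hy] using p_idem C₁ xhat
      | succ k =>
        rw [Function.iterate_succ_apply']
        show p C₁ (p C₁ (p C₂ (p C₁ ((A C₁ C₂)^[k] y)))) = _
        exact p_idem C₁ _
    have hiter : ∀ n, f^[n + 1] xhat = p C₂ ((A C₁ C₂)^[n] y) := by
      intro n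
      induction n with
      | zero => simp [hfp, hy]
      | succ k ih =>
        rw [Function.iterate_succ_apply', ih, hfp]
        rw [Function.iterate_succ_apply']
        show p C₂ (p C₁ (p C₂ ((A C₁ C₂)^[k] y))) = p C₂ (p C₁ (p C₂ (p C₁ ((A C₁ C₂)^[k] y))))
        rw [hfix1 k]
    have htend2 : Filter.Tendsto (fun n => f^[n + 1] xhat) Filter.atTop (nhds (p C₂ z)) := by
      have : Filter.Tendsto (fun n => p C₂ ((A C₁ C₂)^[n] y)) Filter.atTop (nhds (p C₂ z)) :=
        ((p_cont C₂).tendsto z).comp hz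
      simpa only [hiter] using this
    have hpz : p C₂ z = z := p_of_mem C₂ hz2
    rw [hproj]
    rw [← hpz]
    exact (Filter.tendsto_add_atTop_iff_nat 1).1 htend2
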